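/- Let X = ⋃_{n≥0} L_n ⊆ ℝ², where L₀ is the segment [0,1] × {0} and, for each n ≥ 1, L_n is the straight line segment joining (0,0) to (1, 1/n). Then X (with the subspace topology) is contractible, yet there exists no continuous map s : X × X → C([0,1], X) such that s(x,y)(0) = x and s(x,y)(1) = y for all (x,y) ∈ X × X and s(x,x) is the constant path at x for every x ∈ X; in particular tc^M(X) > 0 while tc(X) = 0, so monoidal topological complexity is not a homotopy invariant. -/

import Mathlib

open scoped ENat

/-- A subset `A ⊆ X × X` admits a continuous local section of the path fibration
`π_X : X^I → X × X`, `α ↦ (α(0), α(1))`. -/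
def HasLocalSectionPi {X : Type*} [TopologicalSpace X] (A : Set (X × X)) : Prop :=
  ∃ s : C(A, C(unitInterval, X)), ∀ a : A, ((s a) 0, (s a) 1) = (a : X × X)

/-- Topological complexity: least `n` (or `∞`) such that `X × X` is covered by `n+1`
open subsets each admitting a local section of `π_X`. -/
noncomputable def tc (X : Type*) [TopologicalSpace X] : ℕ∞ :=
  sInf {m : ℕ∞ | ∃ n : ℕ, m = n ∧ ∃ A : Fin (n + 1) → Set (X × X),
    (⋃ i, A i) = Set.univ ∧ ∀ i, IsOpen (A i) ∧ HasLocalSectionPi (A i)}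

/-- A reserved local section of `π_X` on `A`: a continuous section sending each diagonal
point `(x, x) ∈ A` to the constant path at `x`. -/
def HasReservedSection {X : Type*} [TopologicalSpace X] (A : Set (X × X)) : Prop :=
  ∃ s : C(A, C(unitInterval, X)),
    (∀ a : A, ((s a) 0, (s a) 1) = (a : X × X)) ∧
    ∀ (x : X) (h : (x, x) ∈ A) (t : unitInterval), (s ⟨(x, x), h⟩) t = x

/-- Monoidal topological complexity: least `n` (or `∞`) such that `X × X` is covered by
`n+1` open subsets, each containing the diagonal and admitting a reserved local section
of `π_X`. -/
noncomputable def tcM (X : Type*) [TopologicalSpace X] : ℕ∞ :=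
  sInf {m : ℕ∞ | ∃ n : ℕ, m = n ∧ ∃ U : Fin (n + 1) → Set (X × X),
    (⋃ i, U i) = Set.univ ∧
    ∀ i, IsOpen (U i) ∧ (∀ x : X, (x, x) ∈ U i) ∧ HasReservedSection (U i)}

/-- The comb-like subspace `X = ⋃ₙ Lₙ ⊆ ℝ²`, where `L₀ = [0,1] × {0}` and, for `n ≥ 1`,
`Lₙ` is the segment joining `(0,0)` to `(1, 1/n)`. -/
def combSpace : Set (ℝ × ℝ) :=
  segment ℝ ((0 : ℝ), (0 : ℝ)) ((1 : ℝ), (0 : ℝ)) ∪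
    ⋃ n : ℕ, segment ℝ ((0 : ℝ), (0 : ℝ)) ((1 : ℝ), 1 / ((n : ℝ) + 1))

lemma comb_star : StarConvex ℝ ((0,0) : ℝ × ℝ) combSpace := by
  refine StarConvex.union ((convex_segment _ _).starConvex (left_mem_segment _ _ _))
    (starConvex_iUnion fun n => (convex_segment _ _).starConvex (left_mem_segment _ _ _))

lemma comb_smul {z : ℝ × ℝ} (hz : z ∈ combSpace) {c : ℝ} (h0 : 0 ≤ c) (h1 : c ≤ 1) :
    c • z ∈ combSpace := by
  have := comb_star hz (a := 1 - c) (b := c) (by linarith) h0 (by ring)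
  rw [show ((0:ℝ),(0:ℝ)) = (0 : ℝ × ℝ) from rfl] at this
  simpa using this

lemma comb_contractible : ContractibleSpace combSpace :=
  comb_star.contractibleSpace ⟨_, Or.inl (left_mem_segment _ _ _)⟩

noncomputable def combF (x : (combSpace × combSpace) × unitInterval) : ℝ × ℝ :=
  if ((x.2 : ℝ)) ≤ 1/2 then (1 - 2*(x.2:ℝ)) • (x.1.1 : ℝ × ℝ)
  else (2*(x.2:ℝ) - 1) • (x.1.2 : ℝ × ℝ)

lemma combF_mem (x : (combSpace × combSpace) × unitInterval) : combF x ∈ combSpace := by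
  have h0 := x.2.2.1
  have h1 := x.2.2.2
  unfold combF; split_ifs with h
  · exact comb_smul x.1.1.2 (by linarith) (by linarith)
  · exact comb_smul x.1.2.2 (by linarith) (by linarith)

lemma combF_cont : Continuous combF := by
  apply Continuous.if_le
  · exact (continuous_const.sub (continuous_const.mul
      (continuous_subtype_val.comp continuous_snd))).smul
      (continuous_subtype_val.comp (continuous_fst.comp continuous_fst))
  · exact ((continuous_const.mul (continuous_subtype_val.comp continuous_snd)).sub
      continuous_const).smul
      (continuous_subtype_val.comp (continuous_snd.comp continuous_fst))
  · exact continuous_subtype_val.comp continuous_snd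
  · exact continuous_const
  · intro x hx
    rw [hx]
    norm_num

noncomputable def combSec : C(combSpace × combSpace, C(unitInterval, combSpace)) :=
  ContinuousMap.curry ⟨fun x => ⟨combF x, combF_mem x⟩, combF_cont.subtype_mk _⟩

lemma combSec_zero (pq : combSpace × combSpace) : combSec pq 0 = pq.1 := by
  apply Subtype.ext
  show combF (pq, 0) = _
  unfold combF
  norm_num

lemma combSec_one (pq : combSpace × combSpace) : combSec pq 1 = pq.2 := by
  apply Subtype.ext
  show combF (pq, 1) = _
  unfold combF
  norm_num

lemma mem_seg0 {w z : ℝ × ℝ} (h : z ∈ segment ℝ ((0:ℝ),(0:ℝ)) w) :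
    ∃ θ : ℝ, 0 ≤ θ ∧ θ ≤ 1 ∧ z = θ • w := by
  rw [segment_eq_image] at h
  obtain ⟨θ, hθ, rfl⟩ := h
  exact ⟨θ, hθ.1, hθ.2, by simp⟩

noncomputable def sepb (N : ℕ) : ℝ := 1/((N:ℝ)+1) - 1/(2*((N:ℝ)+1)*((N:ℝ)+2))
noncomputable def sepc (N : ℕ) : ℝ := 1/((N:ℝ)+1) + 1/(2*((N:ℝ)+1)*((N:ℝ)+2))

lemma sepb_pos (N : ℕ) : 0 < sepb N := by
  have hn : (0:ℝ) ≤ N := Nat.cast_nonneg N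
  have : sepb N = (2*(N:ℝ)+3)/(2*((N:ℝ)+1)*((N:ℝ)+2)) := by
    unfold sepb; field_simp; ring
  rw [this]; positivity

lemma sepb_lt (N : ℕ) : sepb N < 1/((N:ℝ)+1) := by
  have hn : (0:ℝ) ≤ N := Nat.cast_nonneg N
  have : 0 < 1/(2*((N:ℝ)+1)*((N:ℝ)+2)) := by positivity
  unfold sepb; linarith

lemma sepc_gt (N : ℕ) : 1/((N:ℝ)+1) < sepc N := by
  have hn : (0:ℝ) ≤ N := Nat.cast_nonneg N
  have : 0 < 1/(2*((N:ℝ)+1)*((N:ℝ)+2)) := by positivity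
  unfold sepc; linarith

lemma lt_sepb (N : ℕ) : 1/((N:ℝ)+2) < sepb N := by
  have hn : (0:ℝ) ≤ N := Nat.cast_nonneg N
  have h : sepb N - 1/((N:ℝ)+2) = 1/(2*((N:ℝ)+1)*((N:ℝ)+2)) := by
    unfold sepb; field_simp; ring
  have : 0 < 1/(2*((N:ℝ)+1)*((N:ℝ)+2)) := by positivity
  linarith

lemma sepc_lt {N : ℕ} (hN : 1 ≤ N) : sepc N < 1/(N:ℝ) := by
  have hn : (1:ℝ) ≤ N := by exact_mod_cast hN
  have hn0 : (N:ℝ) ≠ 0 := by linarith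
  have h : 1/(N:ℝ) - sepc N = (((N:ℝ)+4))/(2*(N:ℝ)*((N:ℝ)+1)*((N:ℝ)+2)) := by
    unfold sepc; field_simp; ring
  have h2 : 0 < (((N:ℝ)+4))/(2*(N:ℝ)*((N:ℝ)+1)*((N:ℝ)+2)) := by
    apply div_pos (by linarith) (by nlinarith [sq_nonneg ((N:ℝ)), hn])
  linarith

lemma comb_cover (N : ℕ) {z : ℝ × ℝ} (hz : z ∈ combSpace) (hz0 : z ≠ ((0:ℝ),(0:ℝ))) :
    (sepb N * z.1 < z.2 ∧ z.2 < sepc N * z.1) ∨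
      (z.2 < sepb N * z.1 ∨ sepc N * z.1 < z.2) := by
  rcases hz with hz | hz
  · obtain ⟨θ, h0, h1, rfl⟩ := mem_seg0 hz
    have hθ : 0 < θ := lt_of_le_of_ne h0 (by rintro rfl; exact hz0 (by simp; rfl))
    right; left
    simp only [Prod.smul_mk, smul_eq_mul]
    have := mul_pos (sepb_pos N) hθ
    simpa using this
  · obtain ⟨m, hm⟩ := Set.mem_iUnion.mp hz
    obtain ⟨θ, h0, h1, rfl⟩ := mem_seg0 hm
    have hθ : 0 < θ := lt_of_le_of_ne h0 (by rintro rfl; exact hz0 (by simp; rfl))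
    simp only [Prod.smul_mk, smul_eq_mul, mul_one]
    rcases lt_trichotomy m N with hmN | rfl | hmN
    · right; right
      have hm1N : m + 1 ≤ N := hmN
      have hN1 : 1 ≤ N := le_trans (Nat.le_add_left 1 m) hm1N
      have hc : ((m:ℝ)+1) ≤ (N:ℝ) := by exact_mod_cast hm1N
      have h2 : (1:ℝ)/(N:ℝ) ≤ 1/((m:ℝ)+1) := one_div_le_one_div_of_le (by positivity) hc
      have h3 : sepc N < 1/((m:ℝ)+1) := lt_of_lt_of_le (sepc_lt hN1) h2
      calc sepc N * θ < 1/((m:ℝ)+1) * θ := mul_lt_mul_of_pos_right h3 hθ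
      _ = θ * (1/((m:ℝ)+1)) := by ring
    · left
      constructor
      · calc sepb m * θ < 1/((m:ℝ)+1) * θ := mul_lt_mul_of_pos_right (sepb_lt m) hθ
        _ = θ * (1/((m:ℝ)+1)) := by ring
      · calc θ * (1/((m:ℝ)+1)) = 1/((m:ℝ)+1) * θ := by ring
        _ < sepc m * θ := mul_lt_mul_of_pos_right (sepc_gt m) hθ
    · right; left
      have hm2 : ((N:ℝ)+2) ≤ (m:ℝ)+1 := by
        have h4 : N + 1 ≤ m := hmN
        have h5 : ((N:ℝ)+1) ≤ (m:ℝ) := by exact_mod_cast h4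
        linarith
      have hs : (1:ℝ)/((m:ℝ)+1) ≤ 1/((N:ℝ)+2) :=
        one_div_le_one_div_of_le (by positivity) hm2
      calc θ * (1/((m:ℝ)+1)) = 1/((m:ℝ)+1) * θ := by ring
      _ < sepb N * θ := mul_lt_mul_of_pos_right (lt_of_le_of_lt hs (lt_sepb N)) hθ

lemma comb_no_section :
    ¬ ∃ s : C(combSpace × combSpace, C(unitInterval, combSpace)),
        (∀ p : combSpace × combSpace, (s p) 0 = p.1 ∧ (s p) 1 = p.2) ∧
        ∀ (x : combSpace) (t : unitInterval), (s (x, x)) t = x := by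
  rintro ⟨s, hends, hdiag⟩
  set p : combSpace := ⟨((1:ℝ),(0:ℝ)), Or.inl (right_mem_segment _ _ _)⟩ with hp
  have qmem : ∀ n : ℕ, (((1:ℝ), 1/((n:ℝ)+1)) : ℝ × ℝ) ∈ combSpace := fun n =>
    Or.inr (Set.mem_iUnion.2 ⟨n, right_mem_segment _ _ _⟩)
  set q : ℕ → combSpace := fun n => ⟨((1:ℝ), 1/((n:ℝ)+1)), qmem n⟩ with hqdef
  have hq : Filter.Tendsto q Filter.atTop (nhds p) := by
    rw [tendsto_subtype_rng]
    have h1 : Filter.Tendsto (fun n : ℕ => (((1:ℝ), 1/((n:ℝ)+1)) : ℝ × ℝ))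
        Filter.atTop (nhds ((1:ℝ),(0:ℝ))) :=
      Filter.Tendsto.prodMk_nhds tendsto_const_nhds tendsto_one_div_add_atTop_nhds_zero_nat
    exact h1
  have hs : Filter.Tendsto (fun n => s (p, q n)) Filter.atTop (nhds (s (p, p))) :=
    (s.continuous.tendsto _).comp (Filter.Tendsto.prodMk_nhds tendsto_const_nhds hq)
  obtain ⟨N, hN⟩ := ((Metric.tendsto_nhds.mp hs) (1/2) (by norm_num)).exists
  set γ := s (p, q N) with hγ
  have hγd : ∀ t : unitInterval, dist ((γ t : combSpace) : ℝ × ℝ) (((1:ℝ),(0:ℝ)) : ℝ × ℝ) < 1/2 := by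
    intro t
    have h1 : dist (γ t) ((s (p, p)) t) ≤ dist γ (s (p, p)) :=
      ContinuousMap.dist_apply_le_dist t
    rw [hdiag p t] at h1
    calc dist ((γ t : combSpace) : ℝ × ℝ) (((1:ℝ),(0:ℝ)) : ℝ × ℝ)
        = dist (γ t) p := by rw [Subtype.dist_eq]
      _ ≤ dist γ (s (p, p)) := h1
      _ < 1/2 := hN
  have hne : ∀ t : unitInterval, ((γ t : combSpace) : ℝ × ℝ) ≠ ((0:ℝ),(0:ℝ)) := by
    intro t h
    have := hγd t
    rw [h] at this
    rw [Prod.dist_eq] at this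
    simp [Real.dist_eq] at this
    linarith
  -- connectedness argument
  set U : Set (ℝ × ℝ) := {z | sepb N * z.1 < z.2 ∧ z.2 < sepc N * z.1} with hU
  set V : Set (ℝ × ℝ) := {z | z.2 < sepb N * z.1 ∨ sepc N * z.1 < z.2} with hV
  have hUopen : IsOpen U :=
    (isOpen_lt (continuous_const.mul continuous_fst) continuous_snd).inter
      (isOpen_lt continuous_snd (continuous_const.mul continuous_fst))
  have hVopen : IsOpen V :=
    (isOpen_lt continuous_snd (continuous_const.mul continuous_fst)).union
      (isOpen_lt (continuous_const.mul continuous_fst) continuous_snd)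
  have hconn : IsPreconnected (Set.range fun t : unitInterval => ((γ t : combSpace) : ℝ × ℝ)) :=
    (isConnected_range (continuous_subtype_val.comp γ.continuous)).isPreconnected
  have hcov : (Set.range fun t : unitInterval => ((γ t : combSpace) : ℝ × ℝ)) ⊆ U ∪ V := by
    rintro z ⟨t, rfl⟩
    exact comb_cover N (γ t).2 (hne t)
  have hU1 : ((Set.range fun t : unitInterval => ((γ t : combSpace) : ℝ × ℝ)) ∩ U).Nonempty := by
    refine ⟨((γ 1 : combSpace) : ℝ × ℝ), ⟨1, rfl⟩, ?_⟩
    have h1 : γ 1 = q N := (hends (p, q N)).2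
    rw [h1]
    exact ⟨by simpa [hqdef] using sepb_lt N, by simpa [hqdef] using sepc_gt N⟩
  have hV1 : ((Set.range fun t : unitInterval => ((γ t : combSpace) : ℝ × ℝ)) ∩ V).Nonempty := by
    refine ⟨((γ 0 : combSpace) : ℝ × ℝ), ⟨0, rfl⟩, ?_⟩
    have h0 : γ 0 = p := (hends (p, q N)).1
    rw [h0]
    left
    simpa [hp] using sepb_pos N
  obtain ⟨z, _, hzU, hzV⟩ := hconn U V hUopen hVopen hcov hU1 hV1
  rcases hzV with h | h
  · exact absurd hzU.1 (not_lt.2 h.le)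
  · exact absurd hzU.2 (not_lt.2 h.le)

lemma sInf_eq_zero_mem {S : Set ℕ∞} (h : sInf S = 0) : 0 ∈ S := by
  by_contra hc
  have h1 : (1:ℕ∞) ≤ sInf S := le_sInf fun m hm => by
    rcases eq_or_ne m 0 with rfl | hne
    · exact absurd hm hc
    · exact ENat.one_le_iff_ne_zero.2 hne
  rw [h] at h1
  exact absurd h1 (by norm_num)

/-- The space `combSpace` is contractible, yet it admits no globally continuous reserved
motion planner; in particular `tc^M(combSpace) > 0` while `tc(combSpace) = 0`, so the
monoidal topological complexity is not a homotopy invariant. -/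
theorem combSpace_contractible_and_no_reserved_section :
    ContractibleSpace combSpace ∧
      (¬ ∃ s : C(combSpace × combSpace, C(unitInterval, combSpace)),
        (∀ p : combSpace × combSpace, (s p) 0 = p.1 ∧ (s p) 1 = p.2) ∧
        ∀ (x : combSpace) (t : unitInterval), (s (x, x)) t = x) ∧
      0 < tcM combSpace ∧ tc combSpace = 0 := by
  refine ⟨comb_contractible, comb_no_section, ?_, ?_⟩
  · rw [pos_iff_ne_zero]
    intro h
    apply comb_no_section
    have h0 := sInf_eq_zero_mem (S := {m : ℕ∞ | ∃ n : ℕ, m = n ∧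
      ∃ U : Fin (n + 1) → Set (combSpace × combSpace),
      (⋃ i, U i) = Set.univ ∧
      ∀ i, IsOpen (U i) ∧ (∀ x : combSpace, (x, x) ∈ U i) ∧ HasReservedSection (U i)}) h
    obtain ⟨n, hn, Us, hcov, hprop⟩ := h0
    have hn0 : n = 0 := by exact_mod_cast hn.symm
    subst hn0
    have huniv : ∀ pq : combSpace × combSpace, pq ∈ Us 0 := by
      intro pq
      have hmem : pq ∈ ⋃ i, Us i := hcov ▸ Set.mem_univ pq
      obtain ⟨i, hi⟩ := Set.mem_iUnion.mp hmem
      rwa [show i = 0 from Fin.fin_one_eq_zero i] at hi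
    obtain ⟨-, -, sU, hsU1, hsU2⟩ := hprop 0
    refine ⟨sU.comp ⟨fun pq => ⟨pq, huniv pq⟩, Continuous.subtype_mk continuous_id _⟩,
      fun pq => ?_, fun x t => ?_⟩
    · have h1 := hsU1 ⟨pq, huniv pq⟩
      exact ⟨congrArg Prod.fst h1, congrArg Prod.snd h1⟩
    · exact hsU2 x (huniv (x, x)) t
  · refine le_antisymm (sInf_le ?_) zero_le
    refine ⟨0, by simp, fun _ => Set.univ, Set.iUnion_const _, fun i => ⟨isOpen_univ, ?_⟩⟩
    refine ⟨combSec.comp ⟨Subtype.val, continuous_subtype_val⟩, fun a => ?_⟩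
    show ((combSec (a : combSpace × combSpace)) 0, (combSec (a : combSpace × combSpace)) 1)
      = (a : combSpace × combSpace)
    rw [combSec_zero, combSec_one]
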